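/- General Z_p-XY conjugated Hamiltonian: Fix an integer p ≥ 2 and let ω = exp(2πi/p). In Matrix (Fin p) (Fin p) ℂ (with indices in ZMod p) define the clock matrices τ = the diagonal matrix with entries τ_{k,k} = ω^k, and σ = the cyclic shift matrix with σ_{k,l} = 1 if l = k + 1 (mod p) and 0 otherwise (so σ maps the basis vector e_l to e_{l−1}). Let α : ZMod p → ℂ with α k ≠ 0 for all k, and let m be the diagonal matrix with entries m_{k,k} = α k. Define β_l = (1/p) ∑_{k} (α (k−1) / α k) ω^{−kl}, γ_l = (1/p) ∑_{k} |α (k−1) / α k|² ω^{−kl}, and B = ∑_{l} β_l • τ^l. Working with p²×p² matrices via the Kronecker product ⊗, set L = σ ⊗ 1 − 1 ⊗ σ and L̃ = (m ⊗ m) * L * (m ⊗ m)⁻¹. Then L̃ᴴ * L̃ = −( (Bᴴ * σᴴ) ⊗ (σ * B) + (σ * B) ⊗ (Bᴴ * σᴴ) ) + ∑_{l} γ_l • ( τ^l ⊗ 1 + 1 ⊗ τ^l ). -/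

import Mathlib

open Matrix
open scoped Kronecker Matrix

section helpers

variable {p : ℕ} [NeZero p]

lemma sum_zmod_val_eq_range (f : ℕ → ℂ) :
    ∑ l : ZMod p, f l.val = ∑ i ∈ Finset.range p, f i := by
  refine Finset.sum_nbij' (fun l : ZMod p => l.val) (fun i => (i : ZMod p))
    ?_ ?_ ?_ ?_ ?_
  · intro a _; exact Finset.mem_range.mpr (ZMod.val_lt a)
  · intro a _; exact Finset.mem_univ _
  · intro a _; exact ZMod.natCast_rightInverse a
  · intro a ha; exact ZMod.val_cast_of_lt (Finset.mem_range.mp ha)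
  · intro a _; rfl

lemma orth (hp : 2 ≤ p) {ω : ℂ} (hω : IsPrimitiveRoot ω p) (a b : ZMod p) :
    ∑ l : ZMod p, ω ^ (a.val * l.val) * ω ^ (-((b.val : ℤ) * (l.val : ℤ)))
      = if a = b then (p : ℂ) else 0 := by
  have hω0 : ω ≠ 0 := hω.ne_zero (by omega)
  set d : ℤ := (a.val : ℤ) - b.val with hd
  have hterm : ∀ l : ZMod p,
      ω ^ (a.val * l.val) * ω ^ (-((b.val : ℤ) * (l.val : ℤ))) = (ω ^ d) ^ l.val := by
    intro l
    have h1 : ((a.val * l.val : ℕ) : ℤ) + (-((b.val : ℤ) * l.val)) = d * l.val := by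
      push_cast; ring
    rw [← zpow_natCast ω (a.val * l.val), ← zpow_add₀ hω0, h1, _root_.zpow_mul,
      zpow_natCast]
  simp only [hterm]
  rw [sum_zmod_val_eq_range (f := fun i => (ω ^ d) ^ i)]
  by_cases hab : a = b
  · subst hab
    have : d = 0 := by simp [hd]
    simp [this]
  · have hζ1 : ω ^ d ≠ 1 := by
      intro h
      rw [hω.zpow_eq_one_iff_dvd] at h
      have h1 : (a.val : ℤ) < p := by exact_mod_cast ZMod.val_lt a
      have h2 : (b.val : ℤ) < p := by exact_mod_cast ZMod.val_lt b
      have hne : d ≠ 0 := sub_ne_zero.mpr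
        (by exact_mod_cast fun h' => hab (ZMod.val_injective p h'))
      have hle := Int.le_of_dvd (abs_pos.mpr hne) ((dvd_abs _ _).mpr h)
      have habs : |d| < p := abs_lt.mpr ⟨by omega, by omega⟩
      omega
    have hζp : (ω ^ d) ^ p = 1 := by
      rw [← zpow_natCast (ω ^ d) p, ← _root_.zpow_mul, mul_comm, _root_.zpow_mul,
        zpow_natCast, hω.pow_eq_one, _root_.one_zpow]
    have hgs := geom_sum_mul (ω ^ d) p
    rw [hζp, sub_self] at hgs
    simp only [if_neg hab]
    exact (mul_eq_zero.mp hgs).resolve_right (sub_ne_zero.mpr hζ1)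

lemma inv_dft (hp : 2 ≤ p) {ω : ℂ} (hω : IsPrimitiveRoot ω p) (f : ZMod p → ℂ) (k : ZMod p) :
    ∑ l : ZMod p, ((1 / (p : ℂ)) * ∑ j : ZMod p, f j * ω ^ (-((j.val : ℤ) * (l.val : ℤ))))
      * ω ^ (k.val * l.val) = f k := by
  have hp0 : (p : ℂ) ≠ 0 := Nat.cast_ne_zero.mpr (by omega)
  have h1 : ∀ l : ZMod p, ((1 / (p : ℂ)) * ∑ j : ZMod p, f j * ω ^ (-((j.val : ℤ) * (l.val : ℤ))))
      * ω ^ (k.val * l.val)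
      = ∑ j : ZMod p, (1 / (p : ℂ)) * f j
          * (ω ^ (k.val * l.val) * ω ^ (-((j.val : ℤ) * (l.val : ℤ)))) := by
    intro l
    rw [mul_comm, Finset.mul_sum, Finset.mul_sum]
    exact Finset.sum_congr rfl fun j _ => by ring
  simp only [h1]
  rw [Finset.sum_comm]
  have h2 : ∀ j : ZMod p, ∑ l : ZMod p, (1 / (p : ℂ)) * f j
      * (ω ^ (k.val * l.val) * ω ^ (-((j.val : ℤ) * (l.val : ℤ))))
      = 1 / (p : ℂ) * f j * (if k = j then (p : ℂ) else 0) := by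
    intro j
    rw [← Finset.mul_sum, orth hp hω k j]
  simp only [h2, mul_ite, mul_zero]
  rw [Finset.sum_ite_eq]
  simp only [Finset.mem_univ, if_true]
  field_simp


lemma diagSum {ι : Type*} [Fintype ι] (v : ι → ZMod p → ℂ) :
    (∑ i : ι, Matrix.diagonal (v i)) = Matrix.diagonal (fun k => ∑ i : ι, v i k) := by
  ext a b
  by_cases h : a = b <;> simp [Matrix.sum_apply, Matrix.diagonal_apply, h]

end helpers

section kron
variable {n : Type*}

lemma kron_conjT (A B : Matrix n n ℂ) : (A ⊗ₖ B)ᴴ = Aᴴ ⊗ₖ Bᴴ := by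
  ext ⟨a, b⟩ ⟨c, d⟩
  simp [Matrix.conjTranspose_apply, Matrix.kroneckerMap_apply]

lemma sum_kron {ι : Type*} (s : Finset ι) (A : ι → Matrix n n ℂ) (B : Matrix n n ℂ) :
    (∑ i ∈ s, A i) ⊗ₖ B = ∑ i ∈ s, (A i) ⊗ₖ B := by
  ext ⟨a, b⟩ ⟨c, d⟩
  simp [Matrix.kroneckerMap_apply, Matrix.sum_apply, Finset.sum_mul]

lemma kron_sum {ι : Type*} (s : Finset ι) (A : Matrix n n ℂ) (B : ι → Matrix n n ℂ) :
    A ⊗ₖ (∑ i ∈ s, B i) = ∑ i ∈ s, A ⊗ₖ (B i) := by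
  ext ⟨a, b⟩ ⟨c, d⟩
  simp [Matrix.kroneckerMap_apply, Matrix.sum_apply, Finset.mul_sum]

lemma kron_smul (r : ℂ) (A B : Matrix n n ℂ) : A ⊗ₖ (r • B) = r • (A ⊗ₖ B) := by
  ext ⟨a, b⟩ ⟨c, d⟩
  simp [Matrix.kroneckerMap_apply]
  ring

end kron

/-- The general frustration-free `ℤ_p`-generalisation of the XY chain: conjugating
`L = σ ⊗ 1 - 1 ⊗ σ` by `m ⊗ m` with `m = diag(α₀, …, α_{p-1})` yields
`L̃ᴴ L̃ = -((B†σ†) ⊗ (σB) + (σB) ⊗ (B†σ†)) + ∑_l γ_l (τ^l ⊗ 1 + 1 ⊗ τ^l)`,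
with `B = ∑_l β_l τ^l`, `β_l = (1/p) ∑_k (α_{k-1}/α_k) ω^{-kl}` and
`γ_l = (1/p) ∑_k |α_{k-1}/α_k|² ω^{-kl}`. -/
theorem Zp_XY_conjugated_hamiltonian
    (p : ℕ) [NeZero p] (hp : 2 ≤ p) (α : ZMod p → ℂ) (hα : ∀ k, α k ≠ 0) :
    let ω : ℂ := Complex.exp (2 * Real.pi * Complex.I / p)
    let τ : Matrix (ZMod p) (ZMod p) ℂ := Matrix.diagonal fun k => ω ^ (k.val)
    let σ : Matrix (ZMod p) (ZMod p) ℂ := Matrix.of fun k l => if l = k + 1 then 1 else 0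
    let m : Matrix (ZMod p) (ZMod p) ℂ := Matrix.diagonal α
    let β : ZMod p → ℂ := fun l =>
      (1 / (p : ℂ)) * ∑ k : ZMod p, (α (k - 1) / α k) * ω ^ (-((k.val : ℤ) * (l.val : ℤ)))
    let γ : ZMod p → ℂ := fun l =>
      (1 / (p : ℂ)) * ∑ k : ZMod p,
        ((‖α (k - 1) / α k‖ ^ 2 : ℝ) : ℂ) * ω ^ (-((k.val : ℤ) * (l.val : ℤ)))
    let B : Matrix (ZMod p) (ZMod p) ℂ := ∑ l : ZMod p, β l • τ ^ (l.val)
    let L : Matrix (ZMod p × ZMod p) (ZMod p × ZMod p) ℂ := σ ⊗ₖ 1 - 1 ⊗ₖ σ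
    let L' : Matrix (ZMod p × ZMod p) (ZMod p × ZMod p) ℂ := (m ⊗ₖ m) * L * (m ⊗ₖ m)⁻¹
    L'ᴴ * L' = -((Bᴴ * σᴴ) ⊗ₖ (σ * B) + (σ * B) ⊗ₖ (Bᴴ * σᴴ))
      + ∑ l : ZMod p, γ l • ((τ ^ l.val) ⊗ₖ (1 : Matrix (ZMod p) (ZMod p) ℂ) + (1 : Matrix (ZMod p) (ZMod p) ℂ) ⊗ₖ (τ ^ l.val)) := by
  intro ω τ σ m β γ B L L'
  have hp0 : p ≠ 0 := NeZero.ne p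
  have hω : IsPrimitiveRoot ω p := Complex.isPrimitiveRoot_exp p hp0
  set c : ZMod p → ℂ := fun k => α (k - 1) / α k with hc
  have hσ : ∀ k l : ZMod p, σ k l = if l = k + 1 then 1 else 0 := fun _ _ => rfl
  -- τ powers are diagonal
  have hτl : ∀ l : ZMod p,
      τ ^ l.val = Matrix.diagonal (fun k : ZMod p => ω ^ (k.val * l.val)) := by
    intro l
    show (Matrix.diagonal fun k : ZMod p => ω ^ k.val) ^ l.val = _
    rw [Matrix.diagonal_pow]
    exact congrArg Matrix.diagonal (funext fun k => by
      show (ω ^ k.val) ^ l.val = ω ^ (k.val * l.val)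
      rw [← pow_mul])
  have hB : B = Matrix.diagonal c := by
    show (∑ l : ZMod p, β l • τ ^ l.val) = _
    have h1 : ∀ l : ZMod p, β l • τ ^ l.val
        = Matrix.diagonal (fun k : ZMod p => β l * ω ^ (k.val * l.val)) := by
      intro l
      rw [hτl l, ← Matrix.diagonal_smul]
      rfl
    simp only [h1]
    rw [diagSum]
    exact congrArg Matrix.diagonal (funext fun k => inv_dft hp hω c k)
  set g : ZMod p → ℂ := fun k => star (c k) * c k with hg
  have hG : (∑ l : ZMod p, γ l • τ ^ l.val) = Matrix.diagonal g := by
    have h1 : ∀ l : ZMod p, γ l • τ ^ l.val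
        = Matrix.diagonal (fun k : ZMod p => γ l * ω ^ (k.val * l.val)) := by
      intro l
      rw [hτl l, ← Matrix.diagonal_smul]
      rfl
    simp only [h1]
    rw [diagSum]
    refine congrArg Matrix.diagonal (funext fun k => ?_)
    rw [inv_dft hp hω (fun k => ((‖c k‖ ^ 2 : ℝ) : ℂ)) k]
    show ((‖c k‖ ^ 2 : ℝ) : ℂ) = star (c k) * c k
    rw [Complex.sq_norm, Complex.normSq_eq_conj_mul_self]
    rfl
  -- m inverse
  have hmm' : m * Matrix.diagonal (fun k => (α k)⁻¹) = 1 := by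
    show Matrix.diagonal α * _ = 1
    rw [Matrix.diagonal_mul_diagonal,
      show (fun k => α k * (α k)⁻¹) = fun _ => (1 : ℂ) from
        funext fun k => mul_inv_cancel₀ (hα k), Matrix.diagonal_one]
  have hm_inv : m⁻¹ = Matrix.diagonal fun k => (α k)⁻¹ := Matrix.inv_eq_right_inv hmm'
  have hmm : m * m⁻¹ = 1 := by rw [hm_inv]; exact hmm'
  set S : Matrix (ZMod p) (ZMod p) ℂ := σ * Matrix.diagonal c with hSdef
  have hσB : σ * B = S := by rw [hB]
  have hBσ : Bᴴ * σᴴ = Sᴴ := by rw [← Matrix.conjTranspose_mul, hσB]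
  have hconj : m * σ * m⁻¹ = S := by
    rw [hm_inv, hSdef]
    ext k l
    show (Matrix.diagonal α * σ * Matrix.diagonal fun k => (α k)⁻¹) k l
      = (σ * Matrix.diagonal c) k l
    rw [Matrix.mul_diagonal, Matrix.mul_diagonal, Matrix.diagonal_mul]
    by_cases h : l = k + 1
    · subst h
      have h2 : (k + 1 : ZMod p) - 1 = k := by ring
      rw [hσ, if_pos rfl]
      show α k * 1 * (α (k + 1))⁻¹ = 1 * c (k + 1)
      rw [hc]
      simp only [h2]
      field_simp
    · rw [hσ, if_neg h]
      ring
  have hσσ : σᴴ * σ = 1 := by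
    ext k l
    rw [Matrix.mul_apply, Matrix.one_apply]
    simp only [Matrix.conjTranspose_apply, hσ]
    rw [Finset.sum_eq_single (k - 1)]
    · have h1 : k = k - 1 + 1 := by ring
      rw [if_pos h1, star_one, one_mul]
      by_cases h : k = l
      · rw [if_pos h, if_pos (by rw [← h1, h])]
      · rw [if_neg h, if_neg (by rw [← h1]; exact fun hl => h hl.symm)]
    · intro j _ hj
      have : ¬ k = j + 1 := fun h => hj (by rw [h]; ring)
      rw [if_neg this, star_zero, zero_mul]
    · intro h
      exact absurd (Finset.mem_univ _) h
  have hSS : Sᴴ * S = Matrix.diagonal g := by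
    rw [hSdef, Matrix.conjTranspose_mul, Matrix.diagonal_conjTranspose,
      mul_assoc, ← mul_assoc σᴴ σ, hσσ, one_mul, Matrix.diagonal_mul_diagonal]
    rfl
  have hL' : L' = S ⊗ₖ 1 - 1 ⊗ₖ S := by
    show (m ⊗ₖ m) * (σ ⊗ₖ 1 - 1 ⊗ₖ σ) * (m ⊗ₖ m)⁻¹ = _
    rw [Matrix.inv_kronecker, mul_sub, sub_mul,
      ← Matrix.mul_kronecker_mul, ← Matrix.mul_kronecker_mul,
      ← Matrix.mul_kronecker_mul, ← Matrix.mul_kronecker_mul,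
      hconj, mul_one, hmm]
  -- sum part
  have hsum : (∑ l : ZMod p, γ l • ((τ ^ l.val) ⊗ₖ (1 : Matrix (ZMod p) (ZMod p) ℂ)
        + (1 : Matrix (ZMod p) (ZMod p) ℂ) ⊗ₖ (τ ^ l.val)))
      = (Sᴴ * S) ⊗ₖ (1 : Matrix (ZMod p) (ZMod p) ℂ)
        + (1 : Matrix (ZMod p) (ZMod p) ℂ) ⊗ₖ (Sᴴ * S) := by
    have h1 : ∀ l : ZMod p, γ l • ((τ ^ l.val) ⊗ₖ (1 : Matrix (ZMod p) (ZMod p) ℂ)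
        + (1 : Matrix (ZMod p) (ZMod p) ℂ) ⊗ₖ (τ ^ l.val))
        = (γ l • τ ^ l.val) ⊗ₖ (1 : Matrix (ZMod p) (ZMod p) ℂ)
          + (1 : Matrix (ZMod p) (ZMod p) ℂ) ⊗ₖ (γ l • τ ^ l.val) := by
      intro l
      rw [smul_add, Matrix.smul_kronecker, kron_smul]
    simp only [h1]
    rw [Finset.sum_add_distrib, ← sum_kron, ← kron_sum, hG, hSS]
  rw [hσB, hBσ, hsum, hL']
  have hL'H : (S ⊗ₖ (1 : Matrix (ZMod p) (ZMod p) ℂ) - (1 : Matrix (ZMod p) (ZMod p) ℂ) ⊗ₖ S)ᴴ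
      = Sᴴ ⊗ₖ (1 : Matrix (ZMod p) (ZMod p) ℂ) - (1 : Matrix (ZMod p) (ZMod p) ℂ) ⊗ₖ Sᴴ := by
    rw [Matrix.conjTranspose_sub, kron_conjT, kron_conjT, Matrix.conjTranspose_one]
  rw [hL'H, sub_mul, mul_sub, mul_sub,
    ← Matrix.mul_kronecker_mul, ← Matrix.mul_kronecker_mul,
    ← Matrix.mul_kronecker_mul, ← Matrix.mul_kronecker_mul]
  simp only [one_mul, mul_one]
  abel
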